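/- Let C ⊆ GF(4)ⁿ be a GF(4)-linear code that is self-orthogonal with respect to the trace inner product, and let S be a set of coordinates such that every codeword of C has an even number of nonzero entries in the coordinates of S. Then the code obtained from C by deleting the coordinates in S (the image of C under the projection onto the coordinates outside S) is a GF(4)-linear code of length n − |S| that is self-orthogonal with respect to the trace inner product. -/
import Mathlib


noncomputable section

open Finset Polynomial

/-- The field `GF(4)` with four elements. -/
abbrev F4 := GaloisField 2 2

/-- The trace inner product `u∗v = Σⱼ (uⱼ v̄ⱼ + ūⱼ vⱼ)` on `GF(4)ⁿ`,
where conjugation is `x̄ = x²`.  It takes values in the prime subfield. -/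
def trIP {n : ℕ} (u v : Fin n → F4) : F4 :=
  ∑ j, (u j * (v j) ^ 2 + (u j) ^ 2 * v j)

/-- The Hamming weight of a vector in `GF(4)ⁿ`. -/
def wt {n : ℕ} (u : Fin n → F4) : ℕ := Set.ncard {j | u j ≠ 0}

/-- The dual of a code with respect to the trace inner product. -/
def trDual {n : ℕ} (C : Set (Fin n → F4)) : Set (Fin n → F4) :=
  {u | ∀ v ∈ C, trIP u v = 0}

instance : Fintype F4 := Fintype.ofFinite F4

lemma F4_two : (2 : F4) = 0 := by
  have := CharP.cast_eq_zero F4 2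
  exact_mod_cast this

lemma F4_cube {x : F4} (hx : x ≠ 0) : x ^ 3 = 1 := by
  have hcard : Fintype.card F4 = 4 := by
    have := GaloisField.card 2 2 (by norm_num)
    simpa using this
  have := FiniteField.pow_card_sub_one_eq_one x hx
  rwa [hcard] at this

lemma sum_cube_S {n : ℕ} (S : Finset (Fin n)) (u : Fin n → F4)
    (h : Even (Set.ncard {j | j ∈ S ∧ u j ≠ 0})) :
    ∑ j ∈ S, (u j) ^ 3 = 0 := by
  classical
  have hstep : ∑ j ∈ S, (u j) ^ 3 = ∑ j ∈ S.filter (fun j => u j ≠ 0), (1 : F4) := by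
    rw [Finset.sum_filter]
    apply Finset.sum_congr rfl
    intro j _
    by_cases hj : u j = 0 <;> simp [hj, F4_cube]
  have hset : {j | j ∈ S ∧ u j ≠ 0} = ↑(S.filter (fun j => u j ≠ 0)) := by
    ext j; simp
  rw [hset, Set.ncard_coe_finset] at h
  obtain ⟨k, hk⟩ := h
  rw [hstep, Finset.sum_const, nsmul_eq_mul, mul_one, hk]
  push_cast
  linear_combination (k : F4) * F4_two

/-- Deleting from a self-orthogonal GF(4)-linear code a set S of coordinates
which every codeword meets evenly yields a self-orthogonal GF(4)-linear code
of length n - |S|. -/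
theorem delete_even_coords_selforth (n : ℕ) (C : Submodule F4 (Fin n → F4))
    (hso : ∀ u ∈ C, ∀ v ∈ C, trIP u v = 0)
    (S : Finset (Fin n))
    (heven : ∀ u ∈ C, Even (Set.ncard {j | j ∈ S ∧ u j ≠ 0}))
    (e : Fin (n - S.card) ≃ {j : Fin n // j ∉ S}) :
    ∀ u ∈ Submodule.map (LinearMap.funLeft F4 F4 (fun i => (e i : Fin n))) C,
      ∀ v ∈ Submodule.map (LinearMap.funLeft F4 F4 (fun i => (e i : Fin n))) C,
        trIP u v = 0 := by
  rintro u ⟨u', hu', rfl⟩ v ⟨v', hv', rfl⟩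
  set f : Fin n → F4 := fun j => u' j * (v' j) ^ 2 + (u' j) ^ 2 * v' j with hf
  have hSsum : ∑ j ∈ S, f j = 0 := by
    have h1 := sum_cube_S S u' (heven u' hu')
    have h2 := sum_cube_S S v' (heven v' hv')
    have h3 := sum_cube_S S (u' + v') (heven _ (C.add_mem hu' hv'))
    have key : ∀ j, f j = ((u' + v') j) ^ 3 + (u' j) ^ 3 + (v' j) ^ 3 := by
      intro j
      simp only [hf, Pi.add_apply]
      linear_combination (-(u' j * (v' j) ^ 2 + (u' j) ^ 2 * v' j + (u' j) ^ 3 + (v' j) ^ 3)) * F4_two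
    calc ∑ j ∈ S, f j = ∑ j ∈ S, (((u' + v') j) ^ 3 + (u' j) ^ 3 + (v' j) ^ 3) :=
          Finset.sum_congr rfl (fun j _ => key j)
      _ = (∑ j ∈ S, ((u' + v') j) ^ 3) + (∑ j ∈ S, (u' j) ^ 3) + ∑ j ∈ S, (v' j) ^ 3 := by
          rw [Finset.sum_add_distrib, Finset.sum_add_distrib]
      _ = 0 := by rw [h1, h2, h3]; ring
  have htot : ∑ j, f j = 0 := hso u' hu' v' hv'
  have hcompl : ∑ j ∈ Sᶜ, f j = 0 := by
    have := Finset.sum_add_sum_compl S f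
    rw [hSsum, zero_add] at this
    rw [this, htot]
  show ∑ i, f (e i) = 0
  rw [Equiv.sum_comp e (fun j : {j : Fin n // j ∉ S} => f j)]
  rw [← Finset.sum_subtype Sᶜ (fun x => Finset.mem_compl) f]
  exact hcompl
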